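/- Let A : X → ℝ be θ-Hölder for some θ ∈ (0,1]. In the set of all θ-Hölder sub-actions for A, equipped with the θ-Hölder topology, the subset of separating θ-Hölder sub-actions (those u with M_A(u) = Ω(A)) contains a countable intersection of subsets each of which is open and dense; in particular, the separating θ-Hölder sub-actions form a residual (comeagre) subset of the θ-Hölder sub-actions. -/

import Mathlib

open MeasureTheory Filter Topology

section GLT

variable {X : Type*} [MetricSpace X]

/-- A transitive expanding dynamical system: a continuous, surjective, open,
several-to-one map whose inverse branches are uniformly contracting, and which
is topologically transitive. -/
structure IsExpandingTransitive (T : X → X) : Prop where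
  cont : Continuous T
  surj : Function.Surjective T
  isOpenMap : IsOpenMap T
  finite_preimages : ∀ x : X, {y : X | T y = x}.Finite
  transitive : ∀ U V : Set X, IsOpen U → IsOpen V → U.Nonempty → V.Nonempty →
    ∃ n : ℕ, ((T^[n]) ⁻¹' U ∩ V).Nonempty
  contracting : ∃ lam : ℝ, 0 < lam ∧ lam < 1 ∧ ∃ δ : ℝ, 0 < δ ∧
    ∀ x y : X, dist x y ≤ δ → dist x y ≤ lam * dist (T x) (T y)

/-- `Abar` is the ergodic minimizing value of `A`: the minimum (attained) of
`∫ A dμ` over all `T`-invariant Borel probability measures `μ`. -/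
def IsErgMinValue [MeasurableSpace X] (T : X → X) (A : X → ℝ) (Abar : ℝ) : Prop :=
  (∃ μ : Measure X, IsProbabilityMeasure μ ∧ MeasurePreserving T μ μ ∧ (∫ x, A x ∂μ) = Abar) ∧
  ∀ μ : Measure X, IsProbabilityMeasure μ → MeasurePreserving T μ μ → Abar ≤ ∫ x, A x ∂μ

/-- `f` is θ-Hölder. -/
def IsThetaHolder (θ : ℝ) (f : X → ℝ) : Prop :=
  ∃ C : ℝ, 0 ≤ C ∧ ∀ x y : X, |f x - f y| ≤ C * dist x y ^ θ

/-- `u` is a (continuous) sub-action for `A` with ergodic minimizing value `Abar`. -/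
def IsSubaction (T : X → X) (A : X → ℝ) (Abar : ℝ) (u : X → ℝ) : Prop :=
  Continuous u ∧ ∀ x : X, u (T x) - u x + Abar ≤ A x

/-- The contact locus of a sub-action `u`. -/
def contactLocus (T : X → X) (A : X → ℝ) (Abar : ℝ) (u : X → ℝ) : Set X :=
  {x : X | A x = u (T x) - u x + Abar}

/-- The set `Ω(A)` of non-wandering points with respect to `A`. -/
def nonwanderingSet (T : X → X) (A : X → ℝ) (Abar : ℝ) : Set X :=
  {x : X | ∀ ε : ℝ, 0 < ε → ∃ k : ℕ, 1 ≤ k ∧ ∃ y : X,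
    dist x y < ε ∧ dist x (T^[k] y) < ε ∧
    |∑ j ∈ Finset.range k, (A (T^[j] y) - Abar)| < ε}

/-- `u` is a calibrated sub-action: `u x = min_{T y = x} [u y + A y - Abar]`,
the minimum being attained. -/
def IsCalibrated (T : X → X) (A : X → ℝ) (Abar : ℝ) (u : X → ℝ) : Prop :=
  Continuous u ∧ ∀ x : X,
    (∀ y : X, T y = x → u x ≤ u y + A y - Abar) ∧
    (∃ y : X, T y = x ∧ u x = u y + A y - Abar)

/-- `S_A^ε(x, x', k)`: infimum of Birkhoff sums of `A - Abar` over orbit segments of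
length `k` starting within `ε` of `x` and ending within `ε` of `x'`
(`sInf ∅ = ⊤` in `EReal`). -/
noncomputable def birkhoffInf (T : X → X) (A : X → ℝ) (Abar : ℝ) (ε : ℝ) (x x' : X)
    (k : ℕ) : EReal :=
  sInf {v : EReal | ∃ z : X, dist z x < ε ∧ dist (T^[k] z) x' < ε ∧
    v = ((∑ j ∈ Finset.range k, (A (T^[j] z) - Abar) : ℝ) : EReal)}

/-- The Mañé potential `φ_A(x, x') = lim_{ε→0} inf_{k ≥ 1} S_A^ε(x, x', k)`;
since the quantity is nonincreasing in `ε`, the limit as `ε → 0` is the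
supremum over `ε > 0`. -/
noncomputable def manePotential (T : X → X) (A : X → ℝ) (Abar : ℝ) (x x' : X) : EReal :=
  ⨆ ε : {e : ℝ // 0 < e}, ⨅ k : {n : ℕ // 1 ≤ n}, birkhoffInf T A Abar ε.1 x x' k.1

/-- The Peierls barrier `h_A(x, x') = lim_{ε→0} liminf_{k→∞} S_A^ε(x, x', k)`;
since the quantity is nonincreasing in `ε`, the limit as `ε → 0` is the
supremum over `ε > 0`. -/
noncomputable def peierlsBarrier (T : X → X) (A : X → ℝ) (Abar : ℝ) (x x' : X) : EReal :=
  ⨆ ε : {e : ℝ // 0 < e},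
    Filter.liminf (fun k : ℕ => birkhoffInf T A Abar ε.1 x x' k) Filter.atTop

/-- `C` is an irreducible component of `Ω(A)`: an equivalence class of the
relation `x ∼ x' ↔ h_A(x, x') + h_A(x', x) = 0` on `Ω(A)`. -/
def IsIrredComponent (T : X → X) (A : X → ℝ) (Abar : ℝ) (C : Set X) : Prop :=
  ∃ x ∈ nonwanderingSet T A Abar, C = {y ∈ nonwanderingSet T A Abar |
    peierlsBarrier T A Abar x y + peierlsBarrier T A Abar y x = 0}

/-- The θ-Hölder norm `‖f‖_θ = sup |f| + sup_{x ≠ y} |f x - f y| / d(x,y)^θ`. -/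
noncomputable def holderNorm (θ : ℝ) (f : X → ℝ) : ℝ :=
  (⨆ x : X, |f x|) +
    ⨆ p : {p : X × X // p.1 ≠ p.2}, |f p.1.1 - f p.1.2| / dist p.1.1 p.1.2 ^ θ

end GLT

section AuxGLT

set_option linter.unusedSectionVars false
set_option linter.unusedVariables false

open scoped NNReal

variable {X : Type*} [MetricSpace X]

/-- Subadditivity of `x ↦ x ^ θ` for `0 ≤ θ ≤ 1`. -/
lemma aux_rpow_subadd {θ : ℝ} (hθ0 : 0 ≤ θ) (hθ1 : θ ≤ 1) {a b : ℝ} (ha : 0 ≤ a) (hb : 0 ≤ b) :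
    (a + b) ^ θ ≤ a ^ θ + b ^ θ := by
  have h := NNReal.rpow_add_le_add_rpow a.toNNReal b.toNNReal hθ0 hθ1
  have hco : ((a.toNNReal + b.toNNReal : ℝ≥0) : ℝ) = a + b := by
    push_cast
    rw [Real.coe_toNNReal _ ha, Real.coe_toNNReal _ hb]
  calc (a + b) ^ θ = (((a.toNNReal + b.toNNReal : ℝ≥0) : ℝ)) ^ θ := by rw [hco]
    _ = (((a.toNNReal + b.toNNReal) ^ θ : ℝ≥0) : ℝ) := by rw [NNReal.coe_rpow]
    _ ≤ ((a.toNNReal ^ θ + b.toNNReal ^ θ : ℝ≥0) : ℝ) := by exact_mod_cast h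
    _ = a ^ θ + b ^ θ := by
        push_cast
        rw [Real.coe_toNNReal _ ha, Real.coe_toNNReal _ hb]

lemma aux_pow_rpow_comm {lam θ : ℝ} (h : 0 ≤ lam) (m : ℕ) : (lam ^ m) ^ θ = (lam ^ θ) ^ m := by
  rw [← Real.rpow_natCast lam m, ← Real.rpow_natCast (lam ^ θ) m, ← Real.rpow_mul h,
    ← Real.rpow_mul h, mul_comm]

/-- A θ-Hölder function is continuous. -/
lemma IsThetaHolder.continuous' {θ : ℝ} (hθ0 : 0 < θ) {f : X → ℝ} (hf : IsThetaHolder θ f) :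
    Continuous f := by
  obtain ⟨C, hC0, hC⟩ := hf
  rw [Metric.continuous_iff]
  intro b ε hε
  have hC1 : (0:ℝ) < C + 1 := by linarith
  refine ⟨(ε / (C + 1)) ^ θ⁻¹, Real.rpow_pos_of_pos (by positivity) _, fun a ha => ?_⟩
  have h2 : dist a b ^ θ < ((ε / (C + 1)) ^ θ⁻¹) ^ θ :=
    Real.rpow_lt_rpow dist_nonneg ha hθ0
  rw [Real.rpow_inv_rpow (by positivity) hθ0.ne'] at h2
  have h3 : C * dist a b ^ θ ≤ C * (ε / (C + 1)) :=
    mul_le_mul_of_nonneg_left h2.le hC0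
  have h4 : C * (ε / (C + 1)) < ε := by
    rw [mul_div_assoc'] at *
    rw [div_lt_iff₀ hC1]
    nlinarith
  calc dist (f a) (f b) = |f a - f b| := Real.dist_eq _ _
    _ ≤ C * dist a b ^ θ := hC a b
    _ < ε := lt_of_le_of_lt h3 h4

lemma IsThetaHolder.sub' {θ : ℝ} {f g : X → ℝ} (hf : IsThetaHolder θ f)
    (hg : IsThetaHolder θ g) : IsThetaHolder θ (fun p => f p - g p) := by
  obtain ⟨C, hC0, hC⟩ := hf
  obtain ⟨D, hD0, hD⟩ := hg
  refine ⟨C + D, by linarith, fun p q => ?_⟩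
  have h1 := hC p q
  have h2 := hD p q
  have : |f p - g p - (f q - g q)| ≤ |f p - f q| + |g p - g q| := by
    have := abs_sub (f p - f q) (g p - g q)
    have he : f p - g p - (f q - g q) = (f p - f q) - (g p - g q) := by ring
    rw [he]
    exact abs_sub _ _
  nlinarith [this]

lemma aux_exists_abs_bound [CompactSpace X] [Nonempty X] {f : X → ℝ} (hf : Continuous f) :
    ∃ M : ℝ, 0 ≤ M ∧ ∀ p : X, |f p| ≤ M := by
  obtain ⟨p₀, -, hp₀⟩ := (isCompact_univ (X := X)).exists_isMaxOn Set.univ_nonempty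
    ((continuous_abs.comp hf).continuousOn)
  exact ⟨|f p₀|, abs_nonneg _, fun p => hp₀ (Set.mem_univ p)⟩

lemma aux_exists_dist_bound [CompactSpace X] [Nonempty X] (x : X) :
    ∃ D : ℝ, 0 ≤ D ∧ ∀ p : X, dist p x ≤ D := by
  obtain ⟨M, hM0, hM⟩ := aux_exists_abs_bound (f := fun p => dist p x)
    (continuous_id.dist continuous_const)
  exact ⟨M, hM0, fun p => (le_abs_self _).trans (hM p)⟩

/-- Telescoping: a sub-action bounds Birkhoff sums from below. -/
lemma aux_birkhoff_ge {T : X → X} {A u : X → ℝ} {Abar : ℝ}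
    (hu : ∀ p : X, u (T p) - u p + Abar ≤ A p) (y : X) :
    ∀ k : ℕ, u (T^[k] y) - u y ≤ ∑ j ∈ Finset.range k, (A (T^[j] y) - Abar)
  | 0 => by simp
  | (k + 1) => by
    rw [Finset.sum_range_succ, Function.iterate_succ_apply']
    have h1 := aux_birkhoff_ge hu y k
    have h2 := hu (T^[k] y)
    linarith

/-- Uniform openness of an open map on a compact space. -/
lemma aux_uniform_open [CompactSpace X] {T : X → X} (hc : Continuous T) (ho : IsOpenMap T)
    {ρ : ℝ} (hρ : 0 < ρ) :
    ∃ r₀ : ℝ, 0 < r₀ ∧ ∀ w : X, Metric.ball (T w) r₀ ⊆ T '' Metric.ball w ρ := by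
  by_contra hcon
  push_neg at hcon
  have h1 : ∀ n : ℕ, ∃ w z : X, dist z (T w) < 1 / (n + 1) ∧ z ∉ T '' Metric.ball w ρ := by
    intro n
    obtain ⟨w, hw⟩ := hcon (1 / (n + 1)) (by positivity)
    rw [Set.not_subset] at hw
    obtain ⟨z, hz1, hz2⟩ := hw
    exact ⟨w, z, by simpa [Metric.mem_ball] using hz1, hz2⟩
  choose w z hz1 hz2 using h1
  obtain ⟨a, -, φ, hφmono, hφlim⟩ :=
    (isCompact_univ (X := X)).tendsto_subseq (x := w) (fun n => Set.mem_univ _)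
  have hTw : Filter.Tendsto (fun n => T (w (φ n))) Filter.atTop (nhds (T a)) :=
    (hc.tendsto a).comp hφlim
  have hd1 : Filter.Tendsto (fun n => dist (z (φ n)) (T (w (φ n)))) Filter.atTop (nhds 0) := by
    apply squeeze_zero (fun n => dist_nonneg) (fun n => (hz1 (φ n)).le)
    have hcomp : Filter.Tendsto (fun n : ℕ => 1 / ((φ n : ℝ) + 1)) Filter.atTop (nhds 0) :=
      tendsto_one_div_add_atTop_nhds_zero_nat.comp hφmono.tendsto_atTop
    exact hcomp
  have hzlim : Filter.Tendsto (fun n => z (φ n)) Filter.atTop (nhds (T a)) := by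
    rw [tendsto_iff_dist_tendsto_zero]
    apply squeeze_zero (fun n => dist_nonneg) (fun n => dist_triangle _ (T (w (φ n))) _)
    have h2 := hd1.add (tendsto_iff_dist_tendsto_zero.mp hTw)
    simpa using h2
  have himg : IsOpen (T '' Metric.ball a (ρ / 2)) := ho _ Metric.isOpen_ball
  have hmem : T a ∈ T '' Metric.ball a (ρ / 2) :=
    ⟨a, Metric.mem_ball_self (by positivity), rfl⟩
  obtain ⟨r₁, hr₁, hball⟩ := Metric.isOpen_iff.mp himg _ hmem
  have hev1 : ∀ᶠ n in Filter.atTop, w (φ n) ∈ Metric.ball a (ρ / 2) :=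
    hφlim.eventually_mem (Metric.ball_mem_nhds a (by positivity))
  have hev2 : ∀ᶠ n in Filter.atTop, z (φ n) ∈ Metric.ball (T a) r₁ :=
    hzlim.eventually_mem (Metric.ball_mem_nhds _ hr₁)
  obtain ⟨n, hn1, hn2⟩ := (hev1.and hev2).exists
  apply hz2 (φ n)
  obtain ⟨y, hy, hTy⟩ := hball hn2
  refine ⟨y, ?_, hTy⟩
  rw [Metric.mem_ball] at *
  calc dist y (w (φ n)) ≤ dist y a + dist a (w (φ n)) := dist_triangle _ _ _
    _ < ρ / 2 + ρ / 2 := by rw [dist_comm a]; exact add_lt_add hy hn1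
    _ = ρ := by ring

/-- Contracting inverse branch, one step. -/
lemma aux_branch_step {T : X → X} {lam δ r₀ : ℝ}
    (hcontr : ∀ x y : X, dist x y ≤ δ → dist x y ≤ lam * dist (T x) (T y))
    (hball : ∀ w : X, Metric.ball (T w) r₀ ⊆ T '' Metric.ball w δ)
    {w z' : X} (h : dist (T w) z' < r₀) :
    ∃ y', T y' = z' ∧ dist y' w ≤ lam * dist z' (T w) := by
  have hz' : z' ∈ Metric.ball (T w) r₀ := by rwa [Metric.mem_ball, dist_comm]
  obtain ⟨y', hy', hTy'⟩ := hball w hz'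
  refine ⟨y', hTy', ?_⟩
  have h1 := hcontr y' w (le_of_lt (Metric.mem_ball.mp hy'))
  rwa [hTy'] at h1

/-- Contracting inverse branch along an orbit segment. -/
lemma aux_branch_iter {T : X → X} {lam δ r₀ : ℝ} (hlam0 : 0 ≤ lam) (hlam1 : lam < 1)
    (hcontr : ∀ x y : X, dist x y ≤ δ → dist x y ≤ lam * dist (T x) (T y))
    (hr₀ : 0 < r₀)
    (hball : ∀ w : X, Metric.ball (T w) r₀ ⊆ T '' Metric.ball w δ)
    (k : ℕ) (y z' : X) (h : dist (T^[k] y) z' < r₀) :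
    ∃ y', T^[k] y' = z' ∧ ∀ j, j ≤ k →
      dist (T^[j] y') (T^[j] y) ≤ lam ^ (k - j) * dist (T^[k] y) z' := by
  induction k generalizing z' with
  | zero =>
    refine ⟨z', rfl, fun j hj => ?_⟩
    interval_cases j
    simp [dist_comm]
  | succ k ih =>
    have hstep : dist (T (T^[k] y)) z' < r₀ := by
      have h' := h
      rwa [Function.iterate_succ_apply'] at h'
    obtain ⟨y₁, hy₁, hd₁⟩ := aux_branch_step hcontr hball hstep
    have hd₁' : dist (T^[k] y) y₁ ≤ lam * dist (T^[k + 1] y) z' := by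
      rw [dist_comm]
      rw [dist_comm z' (T (T^[k] y)), ← Function.iterate_succ_apply' T k y] at hd₁
      exact hd₁
    have hlt : dist (T^[k] y) y₁ < r₀ :=
      lt_of_le_of_lt hd₁' (lt_of_le_of_lt
        (by
          have hd : (0:ℝ) ≤ dist (T^[k + 1] y) z' := dist_nonneg
          nlinarith) h)
    obtain ⟨y', hy', hj⟩ := ih y₁ hlt
    refine ⟨y', ?_, ?_⟩
    · rw [Function.iterate_succ_apply', hy', hy₁]
    · intro j hjk
      by_cases hcase : j ≤ k
      · calc dist (T^[j] y') (T^[j] y) ≤ lam ^ (k - j) * dist (T^[k] y) y₁ := hj j hcase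
          _ ≤ lam ^ (k - j) * (lam * dist (T^[k + 1] y) z') :=
              mul_le_mul_of_nonneg_left hd₁' (pow_nonneg hlam0 _)
          _ = lam ^ (k + 1 - j) * dist (T^[k + 1] y) z' := by
              rw [← mul_assoc, ← pow_succ, Nat.succ_sub hcase]
      · have hje : j = k + 1 := by omega
        subst hje
        have : T^[k + 1] y' = z' := by rw [Function.iterate_succ_apply', hy', hy₁]
        rw [this, Nat.sub_self, pow_zero, one_mul, dist_comm]

/-- The set of values of the penalized Mañé potential. -/
def phiSet (T : X → X) (A : X → ℝ) (Abar K θ : ℝ) (x z : X) : Set ℝ :=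
  {v : ℝ | ∃ k : ℕ, 1 ≤ k ∧ ∃ y : X, T^[k] y = z ∧
    v = (∑ j ∈ Finset.range k, (A (T^[j] y) - Abar)) + K * dist y x ^ θ}

/-- The penalized Mañé potential based at `x`. -/
noncomputable def phiAux (T : X → X) (A : X → ℝ) (Abar K θ : ℝ) (x z : X) : ℝ :=
  sInf (phiSet T A Abar K θ x z)

lemma phiSet_nonempty {T : X → X} {A : X → ℝ} {Abar K θ : ℝ} {x : X}
    (hs : Function.Surjective T) (z : X) : (phiSet T A Abar K θ x z).Nonempty := by
  obtain ⟨y, hy⟩ := hs z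
  exact ⟨_, 1, le_refl 1, y, by simpa using hy, rfl⟩

lemma phiSet_lb {T : X → X} {A u : X → ℝ} {Abar K θ : ℝ} {x : X} {Mu : ℝ}
    (hu2 : ∀ p : X, u (T p) - u p + Abar ≤ A p) (hMu : ∀ p : X, |u p| ≤ Mu)
    (hK : 0 ≤ K) {z : X} : ∀ v ∈ phiSet T A Abar K θ x z, -(2 * Mu) ≤ v := by
  rintro v ⟨k, hk, y, hky, rfl⟩
  have h1 := aux_birkhoff_ge hu2 y k
  have h2 := abs_le.mp (hMu (T^[k] y))
  have h3 := abs_le.mp (hMu y)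
  have h4 : 0 ≤ K * dist y x ^ θ := mul_nonneg hK (Real.rpow_nonneg dist_nonneg θ)
  have h2' := h2.1
  have h3' := h3.2
  linarith

lemma phiSet_bddBelow {T : X → X} {A u : X → ℝ} {Abar K θ : ℝ} {x : X} {Mu : ℝ}
    (hu2 : ∀ p : X, u (T p) - u p + Abar ≤ A p) (hMu : ∀ p : X, |u p| ≤ Mu)
    (hK : 0 ≤ K) (z : X) : BddBelow (phiSet T A Abar K θ x z) :=
  ⟨-(2 * Mu), fun v hv => phiSet_lb hu2 hMu hK v hv⟩

lemma phiAux_step {T : X → X} {A u : X → ℝ} {Abar K θ : ℝ} {x : X} {Mu : ℝ}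
    (hs : Function.Surjective T)
    (hu2 : ∀ p : X, u (T p) - u p + Abar ≤ A p) (hMu : ∀ p : X, |u p| ≤ Mu)
    (hK : 0 ≤ K) (z : X) :
    phiAux T A Abar K θ x (T z) ≤ phiAux T A Abar K θ x z + (A z - Abar) := by
  have h := le_csInf (a := phiAux T A Abar K θ x (T z) - (A z - Abar))
    (phiSet_nonempty (A := A) (Abar := Abar) (K := K) (θ := θ) (x := x) hs z) ?_
  · unfold phiAux at h ⊢
    linarith
  · rintro v ⟨k, hk, y, hky, rfl⟩
    have hmem : (∑ j ∈ Finset.range (k + 1), (A (T^[j] y) - Abar)) + K * dist y x ^ θ ∈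
        phiSet T A Abar K θ x (T z) :=
      ⟨k + 1, by omega, y, by rw [Function.iterate_succ_apply', hky], rfl⟩
    have h2 := csInf_le (phiSet_bddBelow hu2 hMu hK (T z)) hmem
    rw [Finset.sum_range_succ, hky] at h2
    unfold phiAux
    linarith [h2]

lemma phiAux_at_Tx {T : X → X} {A u : X → ℝ} {Abar K θ : ℝ} {x : X} {Mu : ℝ}
    (hθ0 : 0 < θ)
    (hu2 : ∀ p : X, u (T p) - u p + Abar ≤ A p) (hMu : ∀ p : X, |u p| ≤ Mu)
    (hK : 0 ≤ K) :
    phiAux T A Abar K θ x (T x) ≤ A x - Abar := by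
  have hmem : (∑ j ∈ Finset.range 1, (A (T^[j] x) - Abar)) + K * dist x x ^ θ ∈
      phiSet T A Abar K θ x (T x) :=
    ⟨1, le_refl 1, x, by simp, rfl⟩
  have h := csInf_le (phiSet_bddBelow hu2 hMu hK (T x)) hmem
  rw [Finset.sum_range_one] at h
  simp only [Function.iterate_zero_apply, dist_self] at h
  rw [Real.zero_rpow hθ0.ne'] at h
  unfold phiAux
  linarith

lemma phiAux_pos_at {T : X → X} {A u : X → ℝ} {Abar K θ : ℝ} {x : X} {Mu εa εb : ℝ}
    (hs : Function.Surjective T)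
    (hu2 : ∀ p : X, u (T p) - u p + Abar ≤ A p) (hMu : ∀ p : X, |u p| ≤ Mu)
    (hK : 0 ≤ K) (hθ0 : 0 < θ) (hεb : 0 < εb)
    (hnr : ∀ k : ℕ, ∀ y : X, 1 ≤ k → T^[k] y = x → dist y x < εb →
      εa ≤ ∑ j ∈ Finset.range k, (A (T^[j] y) - Abar))
    (hKb : εa + 2 * Mu ≤ K * εb ^ θ) :
    εa ≤ phiAux T A Abar K θ x x := by
  apply le_csInf (phiSet_nonempty hs x)
  rintro v ⟨k, hk, y, hky, rfl⟩
  by_cases hd : dist y x < εb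
  · have h1 := hnr k y hk hky hd
    have h2 : 0 ≤ K * dist y x ^ θ := mul_nonneg hK (Real.rpow_nonneg dist_nonneg θ)
    linarith
  · push_neg at hd
    have h1 : εb ^ θ ≤ dist y x ^ θ := Real.rpow_le_rpow hεb.le hd hθ0.le
    have h2 : K * εb ^ θ ≤ K * dist y x ^ θ := mul_le_mul_of_nonneg_left h1 hK
    have h3 := aux_birkhoff_ge hu2 y k
    rw [hky] at h3
    have h4 := abs_le.mp (hMu x)
    have h5 := abs_le.mp (hMu y)
    have h4' := h4.1
    have h5' := h5.2
    linarith

lemma phiAux_holder [CompactSpace X] [Nonempty X]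
    {T : X → X} {A u : X → ℝ} {Abar K θ : ℝ}
    (hT : IsExpandingTransitive T) (hθ0 : 0 < θ) (hθ1 : θ ≤ 1)
    {CA : ℝ} (hCA0 : 0 ≤ CA) (hCA : ∀ p q : X, |A p - A q| ≤ CA * dist p q ^ θ)
    (hu2 : ∀ p : X, u (T p) - u p + Abar ≤ A p) {Mu : ℝ} (hMu : ∀ p : X, |u p| ≤ Mu)
    (hK : 0 ≤ K) (x : X) :
    IsThetaHolder θ (phiAux T A Abar K θ x) := by
  obtain ⟨lam, hlam0, hlam1, δ, hδ, hcontr⟩ := hT.contracting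
  obtain ⟨r₀, hr₀, hball⟩ := aux_uniform_open hT.cont hT.isOpenMap hδ
  set r : ℝ := lam ^ θ with hrdef
  have hr01 : 0 < r := Real.rpow_pos_of_pos hlam0 θ
  have hrlt : r < 1 := Real.rpow_lt_one hlam0.le hlam1 hθ0
  have hgeom : ∀ k : ℕ, ∑ j ∈ Finset.range k, r ^ (k - j) ≤ 1 / (1 - r) := by
    intro k
    have h1 : ∑ j ∈ Finset.range k, r ^ (k - j) = ∑ j ∈ Finset.range k, r ^ (j + 1) := by
      rw [← Finset.sum_range_reflect (fun j => r ^ (j + 1)) k]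
      refine Finset.sum_congr rfl fun j hj => ?_
      have := Finset.mem_range.mp hj
      congr 1
      omega
    have h2 : ∑ j ∈ Finset.range k, r ^ (j + 1) ≤ ∑ j ∈ Finset.range k, r ^ j := by
      refine Finset.sum_le_sum fun j _ => ?_
      rw [pow_succ]
      nlinarith [pow_nonneg hr01.le j, pow_le_one₀ hr01.le hrlt.le (n := j)]
    have h3 : ∑ j ∈ Finset.range k, r ^ j = (r ^ k - 1) / (r - 1) := geom_sum_eq hrlt.ne k
    have h4 : (r ^ k - 1) / (r - 1) ≤ 1 / (1 - r) := by
      have h5 : (r ^ k - 1) / (r - 1) = (1 - r ^ k) / (1 - r) := by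
        rw [div_eq_div_iff (by linarith) (by linarith)]
        ring
      rw [h5, div_le_div_iff₀ (by linarith) (by linarith)]
      nlinarith [pow_nonneg hr01.le k]
    linarith
  set C₁ : ℝ := CA * (1 / (1 - r)) + K with hC₁def
  have hC₁0 : 0 ≤ C₁ := by
    have h : (0:ℝ) ≤ 1 / (1 - r) := by
      apply div_nonneg zero_le_one
      linarith
    exact add_nonneg (mul_nonneg hCA0 h) hK
  have hloc : ∀ z z' : X, dist z z' < r₀ →
      phiAux T A Abar K θ x z' ≤ phiAux T A Abar K θ x z + C₁ * dist z z' ^ θ := by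
    intro z z' hzz
    have key : ∀ v ∈ phiSet T A Abar K θ x z,
        phiAux T A Abar K θ x z' ≤ v + C₁ * dist z z' ^ θ := by
      rintro v ⟨k, hk, y, hky, rfl⟩
      have hd : dist (T^[k] y) z' < r₀ := by rw [hky]; exact hzz
      obtain ⟨y', hy', hj⟩ := aux_branch_iter hlam0.le hlam1 hcontr hr₀ hball k y z' hd
      rw [hky] at hj
      have hmem : (∑ j ∈ Finset.range k, (A (T^[j] y') - Abar)) + K * dist y' x ^ θ ∈
          phiSet T A Abar K θ x z' := ⟨k, hk, y', hy', rfl⟩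
      have h1 := csInf_le (phiSet_bddBelow hu2 hMu hK z') hmem
      set d := dist z z' with hddef
      have hd0 : 0 ≤ d := dist_nonneg
      have hsum : ∑ j ∈ Finset.range k, (A (T^[j] y') - Abar) ≤
          (∑ j ∈ Finset.range k, (A (T^[j] y) - Abar)) + CA * (1 / (1 - r)) * d ^ θ := by
        have hterm : ∀ j ∈ Finset.range k,
            A (T^[j] y') - A (T^[j] y) ≤ CA * (r ^ (k - j)) * d ^ θ := by
          intro j hjm
          have hjk : j ≤ k := (Finset.mem_range.mp hjm).le
          have h2 : dist (T^[j] y') (T^[j] y) ≤ lam ^ (k - j) * d := hj j hjk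
          have h3 : |A (T^[j] y') - A (T^[j] y)| ≤ CA * dist (T^[j] y') (T^[j] y) ^ θ :=
            hCA _ _
          have h4 : dist (T^[j] y') (T^[j] y) ^ θ ≤ (lam ^ (k - j) * d) ^ θ :=
            Real.rpow_le_rpow dist_nonneg h2 hθ0.le
          have h5 : (lam ^ (k - j) * d) ^ θ = r ^ (k - j) * d ^ θ := by
            rw [Real.mul_rpow (pow_nonneg hlam0.le _) hd0, aux_pow_rpow_comm hlam0.le]
          calc A (T^[j] y') - A (T^[j] y) ≤ |A (T^[j] y') - A (T^[j] y)| := le_abs_self _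
            _ ≤ CA * dist (T^[j] y') (T^[j] y) ^ θ := h3
            _ ≤ CA * (r ^ (k - j) * d ^ θ) := by
                refine mul_le_mul_of_nonneg_left ?_ hCA0
                rw [← h5]; exact h4
            _ = CA * (r ^ (k - j)) * d ^ θ := by ring
        have h6 : ∑ j ∈ Finset.range k, (A (T^[j] y') - Abar) -
            ∑ j ∈ Finset.range k, (A (T^[j] y) - Abar) =
            ∑ j ∈ Finset.range k, (A (T^[j] y') - A (T^[j] y)) := by
          rw [← Finset.sum_sub_distrib]
          exact Finset.sum_congr rfl fun j _ => by ring
        have h7 : ∑ j ∈ Finset.range k, (A (T^[j] y') - A (T^[j] y)) ≤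
            ∑ j ∈ Finset.range k, CA * (r ^ (k - j)) * d ^ θ :=
          Finset.sum_le_sum hterm
        have h8 : ∑ j ∈ Finset.range k, CA * (r ^ (k - j)) * d ^ θ =
            CA * d ^ θ * ∑ j ∈ Finset.range k, r ^ (k - j) := by
          rw [Finset.mul_sum]
          exact Finset.sum_congr rfl fun j _ => by ring
        have h9 : CA * d ^ θ * ∑ j ∈ Finset.range k, r ^ (k - j) ≤
            CA * d ^ θ * (1 / (1 - r)) := by
          refine mul_le_mul_of_nonneg_left (hgeom k) ?_
          positivity
        nlinarith [h6, h7, h8, h9]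
      have hpen : K * dist y' x ^ θ ≤ K * dist y x ^ θ + K * d ^ θ := by
        have h2 : dist y' y ≤ lam ^ (k - 0) * d := by
          have := hj 0 (Nat.zero_le k)
          simpa using this
        have h2' : dist y' y ≤ d := by
          have hp1 : lam ^ (k - 0) ≤ 1 := pow_le_one₀ hlam0.le hlam1.le
          nlinarith
        have h3 : dist y' x ≤ dist y x + dist y' y := by
          linarith [dist_triangle y' y x]
        have h4 : dist y' x ^ θ ≤ (dist y x + dist y' y) ^ θ :=
          Real.rpow_le_rpow dist_nonneg h3 hθ0.le
        have h5 : (dist y x + dist y' y) ^ θ ≤ dist y x ^ θ + dist y' y ^ θ :=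
          aux_rpow_subadd hθ0.le hθ1 dist_nonneg dist_nonneg
        have h6 : dist y' y ^ θ ≤ d ^ θ := Real.rpow_le_rpow dist_nonneg h2' hθ0.le
        have h7 : dist y' x ^ θ ≤ dist y x ^ θ + d ^ θ := by linarith
        nlinarith [mul_le_mul_of_nonneg_left h7 hK]
      calc phiAux T A Abar K θ x z' ≤
          (∑ j ∈ Finset.range k, (A (T^[j] y') - Abar)) + K * dist y' x ^ θ := h1
        _ ≤ (∑ j ∈ Finset.range k, (A (T^[j] y) - Abar)) + K * dist y x ^ θ +
            C₁ * d ^ θ := by rw [hC₁def]; nlinarith [hsum, hpen]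
    have h10 := le_csInf (a := phiAux T A Abar K θ x z' - C₁ * dist z z' ^ θ)
      (phiSet_nonempty (A := A) (Abar := Abar) (K := K) (θ := θ) (x := x) hT.surj z)
      (fun v hv => by linarith [key v hv])
    unfold phiAux at h10 ⊢
    linarith
  -- global bounds
  have hAcont : Continuous A := IsThetaHolder.continuous' hθ0 ⟨CA, hCA0, hCA⟩
  obtain ⟨MA, hMA0, hMA⟩ := aux_exists_abs_bound hAcont
  obtain ⟨D, hD0, hD⟩ := aux_exists_dist_bound x
  set Mup : ℝ := MA + |Abar| + K * D ^ θ with hMupdef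
  have hMup0 : 0 ≤ Mup := by positivity
  have hub : ∀ z : X, phiAux T A Abar K θ x z ≤ Mup := by
    intro z
    obtain ⟨y, hy⟩ := hT.surj z
    have hmem : (∑ j ∈ Finset.range 1, (A (T^[j] y) - Abar)) + K * dist y x ^ θ ∈
        phiSet T A Abar K θ x z := ⟨1, le_refl 1, y, by simpa using hy, rfl⟩
    have h1 := csInf_le (phiSet_bddBelow hu2 hMu hK z) hmem
    rw [Finset.sum_range_one] at h1
    simp only [Function.iterate_zero_apply] at h1
    have h2 : A y - Abar ≤ MA + |Abar| := by
      have := abs_le.mp (hMA y)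
      have := abs_le.mp (le_refl |Abar|)
      have habs : -|Abar| ≤ Abar := neg_abs_le Abar
      linarith [(abs_le.mp (hMA y)).2, neg_abs_le Abar]
    have h3 : K * dist y x ^ θ ≤ K * D ^ θ := by
      refine mul_le_mul_of_nonneg_left ?_ hK
      exact Real.rpow_le_rpow dist_nonneg (hD y) hθ0.le
    unfold phiAux
    rw [hMupdef]
    linarith
  have hMu0 : 0 ≤ Mu := le_trans (abs_nonneg _) (hMu x)
  have hlb : ∀ z : X, -(2 * Mu) ≤ phiAux T A Abar K θ x z := fun z =>
    le_csInf (phiSet_nonempty (A := A) (Abar := Abar) (K := K) (θ := θ) (x := x) hT.surj z)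
      (phiSet_lb hu2 hMu hK)
  set C₂ : ℝ := (Mup + 2 * Mu) / r₀ ^ θ with hC₂def
  have hr₀θ : 0 < r₀ ^ θ := Real.rpow_pos_of_pos hr₀ θ
  have hC₂0 : 0 ≤ C₂ := by positivity
  refine ⟨max C₁ C₂, le_max_of_le_left hC₁0, fun z z' => ?_⟩
  have hmaxd : 0 ≤ max C₁ C₂ * dist z z' ^ θ :=
    mul_nonneg (le_trans hC₁0 (le_max_left _ _)) (Real.rpow_nonneg dist_nonneg θ)
  rcases lt_or_ge (dist z z') r₀ with hcase | hcase
  · have h1 := hloc z z' hcase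
    have h2 := hloc z' z (by rwa [dist_comm])
    rw [dist_comm z' z] at h2
    have h3 : C₁ * dist z z' ^ θ ≤ max C₁ C₂ * dist z z' ^ θ :=
      mul_le_mul_of_nonneg_right (le_max_left _ _) (Real.rpow_nonneg dist_nonneg θ)
    rw [abs_le]
    constructor <;> linarith
  · have h1 : |phiAux T A Abar K θ x z - phiAux T A Abar K θ x z'| ≤ Mup + 2 * Mu := by
      rw [abs_le]
      constructor
      · linarith [hub z', hlb z]
      · linarith [hub z, hlb z']
    have h2 : Mup + 2 * Mu = C₂ * r₀ ^ θ := by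
      rw [hC₂def, div_mul_cancel₀ _ hr₀θ.ne']
    have h3 : C₂ * r₀ ^ θ ≤ C₂ * dist z z' ^ θ :=
      mul_le_mul_of_nonneg_left (Real.rpow_le_rpow hr₀.le hcase hθ0.le) hC₂0
    have h4 : C₂ * dist z z' ^ θ ≤ max C₁ C₂ * dist z z' ^ θ :=
      mul_le_mul_of_nonneg_right (le_max_right _ _) (Real.rpow_nonneg dist_nonneg θ)
    linarith

lemma aux_abs_le_holderNorm [CompactSpace X] [Nonempty X] {θ : ℝ} (hθ0 : 0 < θ)
    {f : X → ℝ} (hf : IsThetaHolder θ f) (p : X) : |f p| ≤ holderNorm θ f := by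
  obtain ⟨C, hC0, hC⟩ := hf
  obtain ⟨D, hD0, hD⟩ := aux_exists_dist_bound p
  have hb : ∀ q : X, |f q| ≤ |f p| + C * D ^ θ := by
    intro q
    have h1 := hC q p
    have h2 : dist q p ^ θ ≤ D ^ θ := Real.rpow_le_rpow dist_nonneg (hD q) hθ0.le
    have h3 : |f q| - |f p| ≤ |f q - f p| := abs_sub_abs_le_abs_sub _ _
    nlinarith [mul_le_mul_of_nonneg_left h2 hC0]
  have h1 : |f p| ≤ ⨆ q : X, |f q| :=
    le_ciSup ⟨|f p| + C * D ^ θ, by rintro v ⟨q, rfl⟩; exact hb q⟩ p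
  have h2 : 0 ≤ ⨆ pp : {p : X × X // p.1 ≠ p.2},
      |f pp.1.1 - f pp.1.2| / dist pp.1.1 pp.1.2 ^ θ := by
    by_cases hne : Nonempty {p : X × X // p.1 ≠ p.2}
    · obtain ⟨p₀⟩ := hne
      refine le_trans ?_ (le_ciSup (f := fun pp : {p : X × X // p.1 ≠ p.2} =>
        |f pp.1.1 - f pp.1.2| / dist pp.1.1 pp.1.2 ^ θ) ⟨C, ?_⟩ p₀)
      · positivity
      · rintro v ⟨q, rfl⟩
        have hd : 0 < dist q.1.1 q.1.2 := dist_pos.mpr q.2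
        have hdθ : 0 < dist q.1.1 q.1.2 ^ θ := Real.rpow_pos_of_pos hd θ
        exact (div_le_iff₀ hdθ).mpr (hC _ _)
    · rw [not_nonempty_iff] at hne
      rw [Real.iSup_of_isEmpty]
  unfold holderNorm
  linarith

lemma aux_holderNorm_le [Nonempty X] {θ : ℝ} {f : X → ℝ} {B C : ℝ}
    (hB : ∀ p : X, |f p| ≤ B) (hC0 : 0 ≤ C)
    (hC : ∀ p q : X, |f p - f q| ≤ C * dist p q ^ θ) : holderNorm θ f ≤ B + C := by
  unfold holderNorm
  have h1 : (⨆ x : X, |f x|) ≤ B := ciSup_le hB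
  have h2 : (⨆ pp : {p : X × X // p.1 ≠ p.2},
      |f pp.1.1 - f pp.1.2| / dist pp.1.1 pp.1.2 ^ θ) ≤ C := by
    by_cases hne : Nonempty {p : X × X // p.1 ≠ p.2}
    · exact ciSup_le fun q =>
        (div_le_iff₀ (Real.rpow_pos_of_pos (dist_pos.mpr q.2) θ)).mpr (hC _ _)
    · rw [not_nonempty_iff] at hne
      rw [Real.iSup_of_isEmpty]
      exact hC0
  linarith

/-- At every non-wandering point, every continuous sub-action is calibrated. -/
lemma aux_nonwandering_subset_contact [CompactSpace X]
    {T : X → X} {A : X → ℝ} {Abar : ℝ} (hAc : Continuous A) (hTc : Continuous T)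
    {u : X → ℝ} (hu : IsSubaction T A Abar u) :
    nonwanderingSet T A Abar ⊆ contactLocus T A Abar u := by
  intro x hx
  by_contra hne
  set D : X → ℝ := fun z => A z - (u (T z) - u z + Abar) with hDdef
  have hD0 : ∀ z : X, 0 ≤ D z := fun z => sub_nonneg.mpr (hu.2 z)
  have hDx : 0 < D x := by
    rcases (hD0 x).eq_or_lt with h | h
    · exact absurd (by rw [contactLocus]; simpa [hDdef, sub_eq_zero] using h.symm) hne
    · exact h
  set c : ℝ := D x with hcdef
  have hDc : Continuous D :=
    hAc.sub (((hu.1.comp hTc).sub hu.1).add continuous_const)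
  have hev : ∀ᶠ z in nhds x, c / 2 < D z :=
    (hDc.tendsto x).eventually (eventually_gt_nhds (by rw [← hcdef]; exact half_lt_self hDx))
  obtain ⟨ρ, hρ, hρD⟩ := Metric.eventually_nhds_iff.mp hev
  obtain ⟨η, hη, hηu⟩ := Metric.uniformContinuous_iff.mp
    (CompactSpace.uniformContinuous_of_continuous hu.1) (c / 8) (by positivity)
  set ε : ℝ := min ρ (min η (c / 8)) with hεdef
  have hε : 0 < ε := by
    apply lt_min hρ
    exact lt_min hη (by positivity)
  obtain ⟨k, hk1, y, hd1, hd2, hS⟩ := hx ε hε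
  have hsum : ∑ j ∈ Finset.range k, D (T^[j] y) =
      (∑ j ∈ Finset.range k, (A (T^[j] y) - Abar)) - (u (T^[k] y) - u y) := by
    have htel : ∑ j ∈ Finset.range k, (u (T^[j + 1] y) - u (T^[j] y)) =
        u (T^[k] y) - u (T^[0] y) := Finset.sum_range_sub (fun j => u (T^[j] y)) k
    have hsplit : ∑ j ∈ Finset.range k, D (T^[j] y) =
        (∑ j ∈ Finset.range k, (A (T^[j] y) - Abar)) -
        ∑ j ∈ Finset.range k, (u (T^[j + 1] y) - u (T^[j] y)) := by
      rw [← Finset.sum_sub_distrib]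
      refine Finset.sum_congr rfl fun j _ => ?_
      rw [hDdef]
      simp only [Function.iterate_succ_apply']
      ring
    rw [hsplit, htel]
    simp
  have hd1' : dist y x < η := by
    rw [dist_comm]
    exact lt_of_lt_of_le hd1 (hεdef ▸ (min_le_right _ _).trans (min_le_left _ _))
  have hd2' : dist (T^[k] y) x < η := by
    rw [dist_comm]
    exact lt_of_lt_of_le hd2 (hεdef ▸ (min_le_right _ _).trans (min_le_left _ _))
  have hu1 : |u y - u x| < c / 8 := by
    have := hηu (a := y) (b := x) hd1'
    rwa [Real.dist_eq] at this
  have hu2' : |u (T^[k] y) - u x| < c / 8 := by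
    have := hηu (a := T^[k] y) (b := x) hd2'
    rwa [Real.dist_eq] at this
  have hS' : |∑ j ∈ Finset.range k, (A (T^[j] y) - Abar)| < c / 8 :=
    lt_of_lt_of_le hS (hεdef ▸ (min_le_right _ _).trans (min_le_right _ _))
  have hDy : D y ≤ ∑ j ∈ Finset.range k, D (T^[j] y) := by
    have := Finset.single_le_sum (f := fun j => D (T^[j] y))
      (fun j _ => hD0 _) (Finset.mem_range.mpr (by omega : 0 < k))
    simpa using this
  have hDy2 : c / 2 < D y := hρD (by
    rw [dist_comm]
    exact lt_of_lt_of_le hd1 (hεdef ▸ min_le_left _ _))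
  clear_value c
  clear_value D
  have ha1 := abs_le.mp hu1.le
  have ha2 := abs_le.mp hu2'.le
  have ha3 := abs_le.mp hS'.le
  have : D y ≤ c / 8 + c / 4 + c / 8 := by
    rw [hsum] at hDy
    have heq : u (T^[k] y) - u y = (u (T^[k] y) - u x) - (u y - u x) := by ring
    linarith [hDy, ha1.1, ha1.2, ha2.1, ha2.2, ha3.1, ha3.2, heq]
  linarith

/-- The non-wandering set is closed. -/
lemma aux_mem_nonwandering_of_approx {T : X → X} {A : X → ℝ} {Abar : ℝ} {z : X}
    (h : ∀ r : ℝ, 0 < r → ∃ x' ∈ nonwanderingSet T A Abar, dist z x' < r) :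
    z ∈ nonwanderingSet T A Abar := by
  intro ε hε
  obtain ⟨x', hx', hd⟩ := h (ε / 2) (by positivity)
  obtain ⟨k, hk, y, h1, h2, h3⟩ := hx' (ε / 2) (by positivity)
  refine ⟨k, hk, y, ?_, ?_, by linarith⟩
  · calc dist z y ≤ dist z x' + dist x' y := dist_triangle _ _ _
      _ < ε / 2 + ε / 2 := add_lt_add hd h1
      _ = ε := by ring
  · calc dist z (T^[k] y) ≤ dist z x' + dist x' (T^[k] y) := dist_triangle _ _ _
      _ < ε / 2 + ε / 2 := add_lt_add hd h2
      _ = ε := by ring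

/-- For every point outside the non-wandering set there is a θ-Hölder sub-action
which is not calibrated at that point. -/
lemma aux_exists_separating_at [CompactSpace X] [Nonempty X]
    {T : X → X} (hT : IsExpandingTransitive T) {θ : ℝ} (hθ0 : 0 < θ) (hθ1 : θ ≤ 1)
    {A : X → ℝ} (hA : IsThetaHolder θ A) {Abar : ℝ} {u : X → ℝ}
    (hu : IsSubaction T A Abar u) {x : X} (hx : x ∉ nonwanderingSet T A Abar) :
    ∃ ψ : X → ℝ, IsThetaHolder θ ψ ∧ IsSubaction T A Abar ψ ∧
      ψ (T x) - ψ x + Abar < A x := by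
  obtain ⟨CA, hCA0, hCA⟩ := hA
  obtain ⟨Mu, hMu0, hMu⟩ := aux_exists_abs_bound hu.1
  simp only [nonwanderingSet, Set.mem_setOf_eq] at hx
  push_neg at hx
  obtain ⟨εa, hεa, hnw⟩ := hx
  obtain ⟨η, hη, hηu⟩ := Metric.uniformContinuous_iff.mp
    (CompactSpace.uniformContinuous_of_continuous hu.1) εa hεa
  set εb : ℝ := min εa η with hεbdef
  have hεb : 0 < εb := lt_min hεa hη
  have hnr : ∀ k : ℕ, ∀ y : X, 1 ≤ k → T^[k] y = x → dist y x < εb →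
      εa ≤ ∑ j ∈ Finset.range k, (A (T^[j] y) - Abar) := by
    intro k y hk hky hd
    have hd1 : dist x y < εa := by
      rw [dist_comm]
      exact lt_of_lt_of_le hd (min_le_left _ _)
    have hd2 : dist x (T^[k] y) < εa := by rw [hky]; simpa using hεa
    have habs := hnw k hk y hd1 hd2
    have hbirk := aux_birkhoff_ge hu.2 y k
    rw [hky] at hbirk
    have huxy : |u y - u x| < εa := by
      have := hηu (a := y) (b := x) (lt_of_lt_of_le hd (min_le_right _ _))
      rwa [Real.dist_eq] at this
    rcases le_abs.mp habs with h | h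
    · exact h
    · exfalso
      have h1 := (abs_lt.mp huxy).2
      linarith
  set K : ℝ := (εa + 2 * Mu) / εb ^ θ with hKdef
  have hεbθ : 0 < εb ^ θ := Real.rpow_pos_of_pos hεb θ
  have hK : 0 ≤ K := by positivity
  have hKb : εa + 2 * Mu ≤ K * εb ^ θ := by
    rw [hKdef, div_mul_cancel₀ _ hεbθ.ne']
  set ψ : X → ℝ := phiAux T A Abar K θ x with hψdef
  have hψH : IsThetaHolder θ ψ :=
    phiAux_holder hT hθ0 hθ1 hCA0 hCA hu.2 hMu hK x
  have hψsub : ∀ z : X, ψ (T z) - ψ z + Abar ≤ A z := by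
    intro z
    have := phiAux_step (x := x) (K := K) (θ := θ) hT.surj hu.2 hMu hK z
    rw [hψdef]
    linarith
  have hψpos : εa ≤ ψ x :=
    phiAux_pos_at hT.surj hu.2 hMu hK hθ0 hεb hnr hKb
  have hψTx : ψ (T x) ≤ A x - Abar := phiAux_at_Tx hθ0 hu.2 hMu hK
  exact ⟨ψ, hψH, ⟨hψH.continuous' hθ0, hψsub⟩, by linarith⟩

/-- Density: any θ-Hölder sub-action can be approximated by θ-Hölder sub-actions
whose contact locus lies inside a prescribed open neighborhood of the
non-wandering set. -/
lemma aux_density [CompactSpace X] [Nonempty X]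
    {T : X → X} (hT : IsExpandingTransitive T) {θ : ℝ} (hθ0 : 0 < θ) (hθ1 : θ ≤ 1)
    {A : X → ℝ} (hA : IsThetaHolder θ A) {Abar : ℝ} {u : X → ℝ}
    (hu1 : IsThetaHolder θ u) (hu : IsSubaction T A Abar u)
    {W : Set X} (hW : IsOpen W) (hWΩ : nonwanderingSet T A Abar ⊆ W)
    {ε : ℝ} (hε : 0 < ε) :
    ∃ v : X → ℝ, IsThetaHolder θ v ∧ IsSubaction T A Abar v ∧
      contactLocus T A Abar v ⊆ W ∧ holderNorm θ (fun p => v p - u p) < ε := by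
  classical
  by_cases hKe : Wᶜ = (∅ : Set X)
  · refine ⟨u, hu1, hu, ?_, ?_⟩
    · rw [Set.compl_empty_iff] at hKe
      rw [hKe]
      exact Set.subset_univ _
    · have h0 : holderNorm θ (fun p : X => u p - u p) ≤ 0 + 0 :=
        aux_holderNorm_le (fun p => by simp) le_rfl
          (fun p q => by
            simp only [sub_self, abs_zero]
            positivity)
      linarith
  · have hKc : IsCompact (Wᶜ) := hW.isClosed_compl.isCompact
    have hKne : (Wᶜ).Nonempty := Set.nonempty_iff_ne_empty.mpr hKe
    have hAc : Continuous A := hA.continuous' hθ0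
    -- a separating sub-action at each point of the compact set
    have hchoice : ∀ p : ↥(Wᶜ), ∃ ψ : X → ℝ, IsThetaHolder θ ψ ∧ IsSubaction T A Abar ψ ∧
        ψ (T (p : X)) - ψ (p : X) + Abar < A (p : X) := by
      intro p
      have hpΩ : (p : X) ∉ nonwanderingSet T A Abar := fun hmem => p.2 (hWΩ hmem)
      exact aux_exists_separating_at hT hθ0 hθ1 hA hu hpΩ
    choose ψ hψH hψS hψx using hchoice
    set U : ↥(Wᶜ) → Set X := fun p => {z | ψ p (T z) - ψ p z + Abar < A z} with hUdef
    have hUopen : ∀ p, IsOpen (U p) := by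
      intro p
      exact isOpen_lt (Continuous.add ((((hψH p).continuous' hθ0).comp hT.cont).sub
        ((hψH p).continuous' hθ0)) continuous_const) hAc
    have hUcover : Wᶜ ⊆ ⋃ p : ↥(Wᶜ), U p := by
      intro q hq
      exact Set.mem_iUnion.mpr ⟨⟨q, hq⟩, hψx ⟨q, hq⟩⟩
    obtain ⟨t, ht⟩ := hKc.elim_finite_subcover U hUopen hUcover
    have htne : t.Nonempty := by
      obtain ⟨q, hq⟩ := hKne
      have := ht hq
      rw [Set.mem_iUnion₂] at this
      obtain ⟨p, hp, -⟩ := this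
      exact ⟨p, hp⟩
    set m : ℝ := (t.card : ℝ) with hmdef
    have hm : 0 < m := by
      rw [hmdef]
      exact_mod_cast Finset.card_pos.mpr htne
    -- uniform bounds for the differences ψ p - u
    obtain ⟨Cu, hCu0, hCu⟩ := hu1
    have hg : ∀ p : ↥(Wᶜ), ∃ Bp Cp : ℝ, 0 ≤ Bp ∧ 0 ≤ Cp ∧
        (∀ z : X, |ψ p z - u z| ≤ Bp) ∧
        (∀ z z' : X, |(ψ p z - u z) - (ψ p z' - u z')| ≤ Cp * dist z z' ^ θ) := by
      intro p
      obtain ⟨Bp, hBp0, hBp⟩ := aux_exists_abs_bound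
        (((hψH p).continuous' hθ0).sub hu.1)
      obtain ⟨Cp, hCp0, hCp⟩ := (hψH p).sub' ⟨Cu, hCu0, hCu⟩
      exact ⟨Bp, Cp, hBp0, hCp0, hBp, hCp⟩
    choose B C hB0 hC0 hBb hCb using hg
    set Bt : ℝ := ∑ p ∈ t, B p with hBtdef
    set Ct : ℝ := ∑ p ∈ t, C p with hCtdef
    have hBt0 : 0 ≤ Bt := Finset.sum_nonneg fun p _ => hB0 p
    have hCt0 : 0 ≤ Ct := Finset.sum_nonneg fun p _ => hC0 p
    set s : ℝ := min (1 / m) (ε / (Bt + Ct + 1)) with hsdef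
    have hs0 : 0 < s := lt_min (by positivity) (by positivity)
    have hsm : s * m ≤ 1 := by
      have h1 : s ≤ 1 / m := min_le_left _ _
      calc s * m ≤ (1 / m) * m := mul_le_mul_of_nonneg_right h1 hm.le
        _ = 1 := by field_simp
    set v : X → ℝ := fun z => u z + s * ∑ p ∈ t, (ψ p z - u z) with hvdef
    have hvu : ∀ z : X, v z - u z = s * ∑ p ∈ t, (ψ p z - u z) := fun z => by
      rw [hvdef]; ring
    -- v is θ-Hölder
    have hvH : IsThetaHolder θ v := by
      refine ⟨Cu + s * Ct, by positivity, fun p q => ?_⟩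
      have h1 : v p - v q = (u p - u q) + s * ∑ pp ∈ t, ((ψ pp p - u p) - (ψ pp q - u q)) := by
        simp only [hvdef, Finset.sum_sub_distrib, Finset.sum_const, nsmul_eq_mul]
        ring
      have h2 : |∑ pp ∈ t, ((ψ pp p - u p) - (ψ pp q - u q))| ≤ Ct * dist p q ^ θ := by
        calc |∑ pp ∈ t, ((ψ pp p - u p) - (ψ pp q - u q))| ≤
            ∑ pp ∈ t, |(ψ pp p - u p) - (ψ pp q - u q)| := Finset.abs_sum_le_sum_abs _ _
          _ ≤ ∑ pp ∈ t, C pp * dist p q ^ θ := Finset.sum_le_sum fun pp _ => hCb pp p q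
          _ = Ct * dist p q ^ θ := by rw [hCtdef, Finset.sum_mul]
      calc |v p - v q| ≤ |u p - u q| + |s * ∑ pp ∈ t, ((ψ pp p - u p) - (ψ pp q - u q))| := by
            rw [h1]; exact abs_add_le _ _
        _ ≤ Cu * dist p q ^ θ + s * (Ct * dist p q ^ θ) := by
            have h3 : |s * ∑ pp ∈ t, ((ψ pp p - u p) - (ψ pp q - u q))| =
                s * |∑ pp ∈ t, ((ψ pp p - u p) - (ψ pp q - u q))| := by
              rw [abs_mul, abs_of_pos hs0]
            rw [h3]
            exact add_le_add (hCu p q) (mul_le_mul_of_nonneg_left h2 hs0.le)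
        _ = (Cu + s * Ct) * dist p q ^ θ := by ring
    -- v is a sub-action
    have hvS : IsSubaction T A Abar v := by
      refine ⟨hvH.continuous' hθ0, fun z => ?_⟩
      have hsum1 : ∑ p ∈ t, ((ψ p (T z) - u (T z)) - (ψ p z - u z)) =
          (∑ p ∈ t, (ψ p (T z) - ψ p z + Abar)) - m * (u (T z) - u z + Abar) := by
        rw [hmdef]
        simp only [Finset.sum_sub_distrib, Finset.sum_add_distrib, Finset.sum_const,
          nsmul_eq_mul]
        ring
      have hterm : ∑ p ∈ t, (ψ p (T z) - ψ p z + Abar) ≤ m * A z := by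
        rw [hmdef]
        calc ∑ p ∈ t, (ψ p (T z) - ψ p z + Abar) ≤ ∑ p ∈ t, A z :=
              Finset.sum_le_sum fun p _ => (hψS p).2 z
          _ = (t.card : ℝ) * A z := by rw [Finset.sum_const, nsmul_eq_mul]
      have hexp : v (T z) - v z + Abar =
          (u (T z) - u z + Abar) + s * ((∑ p ∈ t, (ψ p (T z) - ψ p z + Abar)) -
            m * (u (T z) - u z + Abar)) := by
        rw [hmdef]
        simp only [hvdef, Finset.sum_sub_distrib, Finset.sum_add_distrib, Finset.sum_const,
          nsmul_eq_mul]
        ring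
      have hub := hu.2 z
      have h1 : (∑ p ∈ t, (ψ p (T z) - ψ p z + Abar)) - m * (u (T z) - u z + Abar) ≤
          m * A z - m * (u (T z) - u z + Abar) := by linarith
      have h2 : s * ((∑ p ∈ t, (ψ p (T z) - ψ p z + Abar)) - m * (u (T z) - u z + Abar)) ≤
          s * (m * A z - m * (u (T z) - u z + Abar)) :=
        mul_le_mul_of_nonneg_left h1 hs0.le
      have h3 : s * (m * A z - m * (u (T z) - u z + Abar)) =
          (s * m) * (A z - (u (T z) - u z + Abar)) := by ring
      have h4 : (s * m) * (A z - (u (T z) - u z + Abar)) ≤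
          1 * (A z - (u (T z) - u z + Abar)) :=
        mul_le_mul_of_nonneg_right hsm (by linarith)
      rw [hexp]
      linarith
    refine ⟨v, hvH, hvS, ?_, ?_⟩
    · -- the contact locus avoids Wᶜ
      intro z hz
      by_contra hzW
      have hzK : z ∈ Wᶜ := hzW
      have hcov := ht hzK
      rw [Set.mem_iUnion₂] at hcov
      obtain ⟨p, hp, hpz⟩ := hcov
      have hplt : ψ p (T z) - ψ p z + Abar < A z := hpz
      have heq : A z = v (T z) - v z + Abar := hz
      have hsum1 : ∑ pp ∈ t, (ψ pp (T z) - ψ pp z + Abar) < m * A z := by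
        rw [hmdef]
        have := Finset.sum_lt_sum (f := fun pp : ↥(Wᶜ) => ψ pp (T z) - ψ pp z + Abar)
          (g := fun _ => A z)
          (fun pp _ => ((hψS pp).2 z)) ⟨p, hp, hplt⟩
        calc ∑ pp ∈ t, (ψ pp (T z) - ψ pp z + Abar) < ∑ pp ∈ t, A z := this
          _ = (t.card : ℝ) * A z := by rw [Finset.sum_const, nsmul_eq_mul]
      have hsum2 : ∑ p ∈ t, ((ψ p (T z) - u (T z)) - (ψ p z - u z)) =
          (∑ p ∈ t, (ψ p (T z) - ψ p z + Abar)) - m * (u (T z) - u z + Abar) := by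
        rw [hmdef]
        simp only [Finset.sum_sub_distrib, Finset.sum_add_distrib, Finset.sum_const,
          nsmul_eq_mul]
        ring
      have hexp : v (T z) - v z + Abar =
          (u (T z) - u z + Abar) + s * ((∑ p ∈ t, (ψ p (T z) - ψ p z + Abar)) -
            m * (u (T z) - u z + Abar)) := by
        rw [hmdef]
        simp only [hvdef, Finset.sum_sub_distrib, Finset.sum_add_distrib, Finset.sum_const,
          nsmul_eq_mul]
        ring
      have hub := hu.2 z
      have hlt : s * ((∑ p ∈ t, (ψ p (T z) - ψ p z + Abar)) - m * (u (T z) - u z + Abar)) <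
          s * (m * A z - m * (u (T z) - u z + Abar)) := by
        apply mul_lt_mul_of_pos_left _ hs0
        linarith
      have h3 : s * (m * A z - m * (u (T z) - u z + Abar)) =
          (s * m) * (A z - (u (T z) - u z + Abar)) := by ring
      have h4 : (s * m) * (A z - (u (T z) - u z + Abar)) ≤
          1 * (A z - (u (T z) - u z + Abar)) :=
        mul_le_mul_of_nonneg_right hsm (by linarith)
      rw [hexp] at heq
      linarith
    · -- the Hölder norm estimate
      have hfB : ∀ p : X, |v p - u p| ≤ s * Bt := by
        intro p
        rw [hvu p, abs_mul, abs_of_pos hs0]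
        refine mul_le_mul_of_nonneg_left ?_ hs0.le
        calc |∑ pp ∈ t, (ψ pp p - u p)| ≤ ∑ pp ∈ t, |ψ pp p - u p| :=
              Finset.abs_sum_le_sum_abs _ _
          _ ≤ ∑ pp ∈ t, B pp := Finset.sum_le_sum fun pp _ => hBb pp p
          _ = Bt := hBtdef.symm
      have hfC : ∀ p q : X, |(v p - u p) - (v q - u q)| ≤ (s * Ct) * dist p q ^ θ := by
        intro p q
        rw [hvu p, hvu q, ← mul_sub, abs_mul, abs_of_pos hs0, ← Finset.sum_sub_distrib]
        rw [mul_assoc]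
        refine mul_le_mul_of_nonneg_left ?_ hs0.le
        calc |∑ pp ∈ t, ((ψ pp p - u p) - (ψ pp q - u q))| ≤
            ∑ pp ∈ t, |(ψ pp p - u p) - (ψ pp q - u q)| := Finset.abs_sum_le_sum_abs _ _
          _ ≤ ∑ pp ∈ t, C pp * dist p q ^ θ := Finset.sum_le_sum fun pp _ => hCb pp p q
          _ = Ct * dist p q ^ θ := by rw [hCtdef, Finset.sum_mul]
      have hnorm : holderNorm θ (fun p : X => v p - u p) ≤ s * Bt + s * Ct :=
        aux_holderNorm_le hfB (mul_nonneg hs0.le hCt0) hfC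
      have hslt : s * (Bt + Ct) < ε := by
        have h1 : s ≤ ε / (Bt + Ct + 1) := min_le_right _ _
        have h2 : s * (Bt + Ct) ≤ (ε / (Bt + Ct + 1)) * (Bt + Ct) :=
          mul_le_mul_of_nonneg_right h1 (by linarith)
        have h3 : (ε / (Bt + Ct + 1)) * (Bt + Ct) < ε := by
          rw [div_mul_eq_mul_div, div_lt_iff₀ (by linarith)]
          nlinarith
        linarith
      calc holderNorm θ (fun p : X => v p - u p) ≤ s * Bt + s * Ct := hnorm
        _ = s * (Bt + Ct) := by ring
        _ < ε := hslt

end AuxGLT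

/-- the separating θ-Hölder sub-actions contain a countable
intersection of subsets of the θ-Hölder sub-actions, each open and dense
for the θ-Hölder topology; hence they are residual. -/
theorem separating_subactions_residual {X : Type*} [MetricSpace X] [CompactSpace X] [Nonempty X]
    [MeasurableSpace X] [BorelSpace X]
    (T : X → X) (hT : IsExpandingTransitive T)
    (θ : ℝ) (hθ0 : 0 < θ) (hθ1 : θ ≤ 1)
    (A : X → ℝ) (hA : IsThetaHolder θ A)
    (Abar : ℝ) (hAbar : IsErgMinValue T A Abar) :
    ∃ G : ℕ → Set (X → ℝ),
      (∀ n : ℕ, ∀ u ∈ G n, IsThetaHolder θ u ∧ IsSubaction T A Abar u) ∧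
      (∀ n : ℕ, ∀ u ∈ G n, ∃ ε : ℝ, 0 < ε ∧
        ∀ v : X → ℝ, IsThetaHolder θ v → IsSubaction T A Abar v →
          holderNorm θ (fun x => v x - u x) < ε → v ∈ G n) ∧
      (∀ n : ℕ, ∀ u : X → ℝ, IsThetaHolder θ u → IsSubaction T A Abar u →
        ∀ ε : ℝ, 0 < ε → ∃ v ∈ G n, holderNorm θ (fun x => v x - u x) < ε) ∧
      (∀ u ∈ ⋂ n : ℕ, G n,
        contactLocus T A Abar u = nonwanderingSet T A Abar) := by
  classical
  set Ω : Set X := nonwanderingSet T A Abar with hΩdef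
  refine ⟨fun n => {u : X → ℝ | IsThetaHolder θ u ∧ IsSubaction T A Abar u ∧
    contactLocus T A Abar u ⊆ Metric.thickening (1 / (n + 1)) Ω}, ?_, ?_, ?_, ?_⟩
  · exact fun n u hu => ⟨hu.1, hu.2.1⟩
  · -- openness
    intro n u hu
    obtain ⟨hu1, hu2, hu3⟩ := hu
    set W : Set X := Metric.thickening (1 / (n + 1)) Ω with hWdef
    by_cases hKe : Wᶜ = (∅ : Set X)
    · refine ⟨1, one_pos, fun v hv1 hv2 _ => ⟨hv1, hv2, ?_⟩⟩
      rw [Set.compl_empty_iff] at hKe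
      rw [← hWdef, hKe]
      exact Set.subset_univ _
    · have hKc : IsCompact (Wᶜ) := (Metric.isOpen_thickening.isClosed_compl).isCompact
      have hKne : (Wᶜ).Nonempty := Set.nonempty_iff_ne_empty.mpr hKe
      set D : X → ℝ := fun z => A z - (u (T z) - u z + Abar) with hDdef
      have hDc : Continuous D :=
        (hA.continuous' hθ0).sub (((hu2.1.comp hT.cont).sub hu2.1).add continuous_const)
      obtain ⟨z₀, hz₀K, hz₀min⟩ := hKc.exists_isMinOn hKne hDc.continuousOn
      have hc : 0 < D z₀ := by
        rcases (sub_nonneg.mpr (hu2.2 z₀)).eq_or_lt with h | h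
        · exfalso
          have hz₀con : z₀ ∈ contactLocus T A Abar u := by
            rw [contactLocus]
            simp only [Set.mem_setOf_eq]
            have : D z₀ = 0 := h.symm
            rw [hDdef] at this
            simp only [sub_eq_zero] at this
            exact this
          exact hz₀K (hu3 hz₀con)
        · exact h
      refine ⟨D z₀ / 3, by positivity, fun v hv1 hv2 hvn => ⟨hv1, hv2, ?_⟩⟩
      intro z hz
      by_contra hzW
      have hzK : z ∈ Wᶜ := hzW
      have h2 : D z₀ ≤ D z := hz₀min hzK
      have hvu : IsThetaHolder θ (fun p => v p - u p) := hv1.sub' hu1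
      have h3 := aux_abs_le_holderNorm hθ0 hvu (T z)
      have h4 := aux_abs_le_holderNorm hθ0 hvu z
      have heq : A z = v (T z) - v z + Abar := hz
      have h5 : D z = (v (T z) - u (T z)) - (v z - u z) := by
        rw [hDdef]
        simp only []
        rw [heq]
        ring
      have h7 := abs_le.mp (h3.trans hvn.le)
      have h8 := abs_le.mp (h4.trans hvn.le)
      rw [h5] at h2
      clear_value D
      linarith [h7.1, h7.2, h8.1, h8.2]
  · -- density
    intro n u hu1 hu2 ε hε
    have hWo : IsOpen (Metric.thickening (1 / (n + 1) : ℝ) Ω) := Metric.isOpen_thickening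
    have hWΩ : Ω ⊆ Metric.thickening (1 / (n + 1) : ℝ) Ω :=
      Metric.self_subset_thickening (by positivity) Ω
    obtain ⟨v, hv1, hv2, hv3, hv4⟩ := aux_density hT hθ0 hθ1 hA hu1 hu2 hWo hWΩ hε
    exact ⟨v, ⟨hv1, hv2, hv3⟩, hv4⟩
  · -- intersection
    intro u hu
    have h0 := Set.mem_iInter.mp hu 0
    obtain ⟨hu1, hu2, -⟩ := h0
    apply Set.Subset.antisymm
    · intro z hz
      apply aux_mem_nonwandering_of_approx
      intro r hr
      obtain ⟨nn, hnn⟩ := exists_nat_one_div_lt (K := ℝ) hr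
      have hmem := (Set.mem_iInter.mp hu nn).2.2 hz
      rw [Metric.mem_thickening_iff] at hmem
      obtain ⟨x', hx', hd⟩ := hmem
      exact ⟨x', hx', by exact_mod_cast hd.trans hnn⟩
    · exact aux_nonwandering_subset_contact (hA.continuous' hθ0) hT.cont hu2
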